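/- For all integers n ≥ 0 and k ≥ 0, the number of odd-special Dyck paths of length 2n with exactly k special steps equals the number of big Schröder paths of length 2n with exactly k double horizontal steps. -/

import Mathlib

/-- A step of a Schröder path: upstep, downstep, or a *double* horizontal step. -/
inductive SchStep : Type
  | up : SchStep
  | down : SchStep
  | horiz : SchStep
deriving DecidableEq

/-- The number of unit steps a step occupies: `horiz` is a double horizontal step. -/
def SchStep.len : SchStep → ℕ
  | .up => 1
  | .down => 1
  | .horiz => 2

/-- The change in height produced by a step. -/
def SchStep.rise : SchStep → ℤ
  | .up => 1
  | .down => -1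
  | .horiz => 0

/-- The length of a path (a double horizontal step counts 2). -/
def pathLen (p : List SchStep) : ℕ := (p.map SchStep.len).sum

/-- The final height of a path started at height 0. -/
def pathHeight (p : List SchStep) : ℤ := (p.map SchStep.rise).sum

/-- A big Schröder path: ends at height 0 and never goes below the x-axis. -/
def IsBigSchroeder (p : List SchStep) : Prop :=
  pathHeight p = 0 ∧ ∀ q : List SchStep, q <+: p → 0 ≤ pathHeight q

/-- A little Schröder path: a big Schröder path with no double horizontal step at
height 0. -/
def IsLittleSchroeder (p : List SchStep) : Prop :=
  IsBigSchroeder p ∧ ∀ q r : List SchStep, p = q ++ SchStep.horiz :: r → pathHeight q ≠ 0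

/-- A Dyck path is a list of booleans: `true` is an upstep, `false` is a downstep. -/
def dyckHeight (p : List Bool) : ℤ := (p.map fun b => if b then (1 : ℤ) else -1).sum

/-- A Dyck path: ends at height 0 and never goes below the x-axis. -/
def IsDyck (p : List Bool) : Prop :=
  dyckHeight p = 0 ∧ ∀ q : List Bool, q <+: p → 0 ≤ dyckHeight q

/-- An odd-special Dyck path: a Dyck path `ps.1` together with a marked set `ps.2` of
positions of downsteps leaving from odd height. -/
def IsOddSpecial (ps : List Bool × Finset ℕ) : Prop :=
  IsDyck ps.1 ∧
    ∀ i ∈ ps.2, i < ps.1.length ∧ ps.1.getD i true = false ∧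
      dyckHeight (ps.1.take i) % 2 = 1


open List

section Generic
variable {α : Type*}

def wsum (w : α → ℤ) (l : List α) : ℤ := (l.map w).sum

@[simp] lemma wsum_nil (w : α → ℤ) : wsum w [] = 0 := rfl
@[simp] lemma wsum_cons (w : α → ℤ) (x : α) (l : List α) :
    wsum w (x :: l) = w x + wsum w l := by simp [wsum]
@[simp] lemma wsum_append (w : α → ℤ) (l1 l2 : List α) :
    wsum w (l1 ++ l2) = wsum w l1 + wsum w l2 := by simp [wsum]

lemma exists_first_drop (w : α → ℤ) (l : List α) (h : wsum w l < 0) :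
    ∃ A x B, l = A ++ x :: B ∧ (∀ q, q <+: A → 0 ≤ wsum w q) ∧
      wsum w (A ++ [x]) < 0 := by
  have hne : l ≠ [] := by rintro rfl; simp at h
  have hQ : ∃ m, wsum w (l.take (m+1)) < 0 :=
    ⟨l.length - 1, by
      rwa [Nat.sub_add_cancel (Nat.one_le_iff_ne_zero.2 (by simpa using hne)),
        List.take_length]⟩
  classical
  obtain ⟨j, hj, hjmin⟩ : ∃ j, wsum w (l.take (j+1)) < 0 ∧
      ∀ m, m < j → ¬ wsum w (l.take (m+1)) < 0 :=
    ⟨Nat.find hQ, Nat.find_spec hQ, fun m hm => Nat.find_min hQ hm⟩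
  have hjle : j ≤ l.length - 1 := by
    by_contra hgt
    push_neg at hgt
    have := hjmin _ hgt
    rw [Nat.sub_add_cancel (Nat.one_le_iff_ne_zero.2 (by simpa using hne)),
      List.take_length] at this
    exact this h
  have hjlt : j < l.length := by
    have : l.length ≠ 0 := by simpa using hne
    omega
  refine ⟨l.take j, l[j], l.drop (j+1), ?_, ?_, ?_⟩
  · conv_lhs => rw [← List.take_append_drop j l]
    rw [List.drop_eq_getElem_cons hjlt]
  · intro q hq
    have hql : q <+: l := hq.trans (List.take_prefix _ _)
    have hqt : q = l.take q.length := List.prefix_iff_eq_take.mp hql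
    have hlen : q.length ≤ j := by
      have := hq.length_le
      simp only [List.length_take] at this
      omega
    rcases Nat.eq_zero_or_pos q.length with h0 | h0
    · rw [List.eq_nil_of_length_eq_zero h0]; simp
    · obtain ⟨m, hm⟩ : ∃ m, q.length = m + 1 := ⟨q.length - 1, by omega⟩
      have hmj : m < j := by omega
      have := hjmin _ hmj
      rw [hqt, hm]
      omega
  · have : l.take j ++ [l[j]] = l.take (j+1) := by
      rw [List.take_succ]
      simp [List.getElem?_eq_getElem hjlt]
    rw [this]; exact hj

lemma first_drop_unique (w : α → ℤ) {A A' B B' : List α} {x x' : α}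
    (hl : A ++ x :: B = A' ++ x' :: B')
    (h1 : ∀ q, q <+: A → 0 ≤ wsum w q) (h2 : wsum w (A ++ [x]) < 0)
    (h1' : ∀ q, q <+: A' → 0 ≤ wsum w q) (h2' : wsum w (A' ++ [x']) < 0) :
    A = A' ∧ x = x' ∧ B = B' := by
  have p1 : A ++ [x] <+: A ++ x :: B := ⟨B, by simp⟩
  have p2 : A' ++ [x'] <+: A ++ x :: B := by rw [hl]; exact ⟨B', by simp⟩
  have pa : A <+: A ++ x :: B := ⟨x :: B, rfl⟩
  have pa' : A' <+: A ++ x :: B := by rw [hl]; exact ⟨x' :: B', rfl⟩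
  have hAA : A.length = A'.length := by
    by_contra hne
    rcases Nat.lt_or_ge A.length A'.length with h | h
    · have : A ++ [x] <+: A' :=
        List.prefix_of_prefix_length_le p1 pa' (by simp; omega)
      exact absurd (h1' _ this) (by simpa using h2)
    · have h' : A'.length < A.length := by omega
      have : A' ++ [x'] <+: A :=
        List.prefix_of_prefix_length_le p2 pa (by simp; omega)
      exact absurd (h1 _ this) (by simpa using h2')
  have hA : A = A' :=
    (List.prefix_of_prefix_length_le pa pa' (le_of_eq hAA)).eq_of_length hAA
  subst hA
  have := List.append_cancel_left hl
  exact ⟨rfl, by injection this, by injection this⟩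

lemma prefix_nonneg_iff_take (w : α → ℤ) (p : List α) :
    (∀ q, q <+: p → 0 ≤ wsum w q) ↔ ∀ i, 0 ≤ wsum w (p.take i) := by
  constructor
  · exact fun h i => h _ (List.take_prefix _ _)
  · intro h q hq
    rw [List.prefix_iff_eq_take.mp hq]; exact h _

end Generic

section Composite
variable {α : Type*} (w : α → ℤ) (u d : α) (A B : List α)

lemma wtake_cons_mid {i : ℕ} (h1 : 1 ≤ i) (h2 : i ≤ A.length + 1) :
    wsum w ((u :: (A ++ d :: B)).take i) = w u + wsum w (A.take (i-1)) := by
  obtain ⟨m, rfl⟩ : ∃ m, i = m + 1 := ⟨i - 1, by omega⟩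
  rw [List.take_succ_cons, wsum_cons]
  congr 2
  rw [List.take_append_of_le_length (by omega)]
  simp

lemma wtake_cons_right {i : ℕ} (h : A.length + 2 ≤ i) :
    wsum w ((u :: (A ++ d :: B)).take i) =
      w u + wsum w A + w d + wsum w (B.take (i - (A.length + 2))) := by
  obtain ⟨m, rfl⟩ : ∃ m, i = m + 1 := ⟨i - 1, by omega⟩
  rw [List.take_succ_cons, wsum_cons, List.take_append]
  obtain ⟨j, hj⟩ : ∃ j, m - A.length = j + 1 := ⟨m - A.length - 1, by omega⟩
  rw [hj, List.take_of_length_le (by omega), List.take_succ_cons]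
  have h3 : m + 1 - (A.length + 2) = j := by omega
  rw [h3]
  simp [wsum]
  ring

lemma wtake_app_left {q r : List α} {i : ℕ} (h : i ≤ q.length) :
    wsum w ((q ++ r).take i) = wsum w (q.take i) := by
  rw [List.take_append_of_le_length h]

lemma wtake_app_right {q r : List α} {x : α} {i : ℕ} (h : q.length + 1 ≤ i) :
    wsum w ((q ++ x :: r).take i) = wsum w q + w x + wsum w (r.take (i - (q.length + 1))) := by
  rw [List.take_append]
  obtain ⟨j, hj⟩ : ∃ j, i - q.length = j + 1 := ⟨i - q.length - 1, by omega⟩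
  rw [hj, List.take_of_length_le (by omega), List.take_succ_cons]
  have : i - (q.length + 1) = j := by omega
  rw [this]
  simp [wsum]
  ring

lemma getq_cons_zero : (u :: (A ++ d :: B))[0]? = some u := List.getElem?_cons_zero

lemma getq_cons_mid {i : ℕ} (h1 : 1 ≤ i) (h2 : i ≤ A.length) :
    (u :: (A ++ d :: B))[i]? = A[i - 1]? := by
  obtain ⟨m, rfl⟩ : ∃ m, i = m + 1 := ⟨i - 1, by omega⟩
  rw [List.getElem?_cons_succ, List.getElem?_append_left (by omega)]
  simp

lemma getq_cons_close : (u :: (A ++ d :: B))[A.length + 1]? = some d := by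
  rw [List.getElem?_cons_succ, List.getElem?_append_right (by omega)]
  simp

lemma getq_cons_right {i : ℕ} (h : A.length + 2 ≤ i) :
    (u :: (A ++ d :: B))[i]? = B[i - (A.length + 2)]? := by
  obtain ⟨m, rfl⟩ : ∃ m, i = m + 1 := ⟨i - 1, by omega⟩
  rw [List.getElem?_cons_succ, List.getElem?_append_right (by omega)]
  obtain ⟨j, hj⟩ : ∃ j, m - A.length = j + 1 := ⟨m - A.length - 1, by omega⟩
  rw [hj, List.getElem?_cons_succ]
  congr 1
  omega

lemma getq_split {p q r : List α} {x : α} (h : p = q ++ x :: r) :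
    p[q.length]? = some x := by
  subst h
  rw [List.getElem?_append_right le_rfl]
  simp

lemma getq_split' {p : List α} {m : ℕ} {x : α} (h : p[m]? = some x) :
    p = p.take m ++ x :: p.drop (m + 1) ∧ (p.take m).length = m := by
  have hm : m < p.length := by
    by_contra hge
    rw [List.getElem?_eq_none (by omega)] at h
    exact absurd h (by simp)
  constructor
  · conv_lhs => rw [← List.take_append_drop m p]
    rw [List.drop_eq_getElem_cons hm]
    have : p[m] = x := by
      have := List.getElem?_eq_getElem hm
      rw [h] at this
      exact (Option.some_inj.mp this.symm)
    rw [this]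
  · simp [hm.le]

end Composite

/-! ### Specialization to Dyck and Schröder paths -/

def dw : Bool → ℤ := fun b => if b then 1 else -1

lemma dh_eq (l : List Bool) : dyckHeight l = wsum dw l := rfl
lemma ph_eq (p : List SchStep) : pathHeight p = wsum SchStep.rise p := rfl

lemma dw_mem (x : Bool) : dw x = 1 ∨ dw x = -1 := by cases x <;> simp [dw]
lemma rise_cases (x : SchStep) :
    SchStep.rise x = 1 ∨ SchStep.rise x = -1 ∨ SchStep.rise x = 0 := by
  cases x <;> simp [SchStep.rise]

lemma isDyck_iff (p : List Bool) :
    IsDyck p ↔ dyckHeight p = 0 ∧ ∀ i, 0 ≤ dyckHeight (p.take i) := by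
  unfold IsDyck
  rw [dh_eq]
  constructor
  · rintro ⟨h0, h1⟩
    exact ⟨h0, (prefix_nonneg_iff_take dw p).mp (fun q hq => h1 q hq)⟩
  · rintro ⟨h0, h1⟩
    exact ⟨h0, fun q hq => (prefix_nonneg_iff_take dw p).mpr h1 q hq⟩

lemma isBig_iff (p : List SchStep) :
    IsBigSchroeder p ↔ pathHeight p = 0 ∧ ∀ i, 0 ≤ pathHeight (p.take i) := by
  unfold IsBigSchroeder
  rw [ph_eq]
  constructor
  · rintro ⟨h0, h1⟩
    exact ⟨h0, (prefix_nonneg_iff_take _ p).mp (fun q hq => h1 q hq)⟩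
  · rintro ⟨h0, h1⟩
    exact ⟨h0, fun q hq => (prefix_nonneg_iff_take _ p).mpr h1 q hq⟩

/-! #### parity / length -/

lemma dyck_length_eq (l : List Bool) :
    (l.length : ℤ) = dyckHeight l + 2 * l.count false := by
  induction l with
  | nil => simp [dyckHeight]
  | cons x t ih =>
    rw [dh_eq] at ih ⊢
    cases x <;> simp [wsum_cons, List.count_cons, dw] <;> push_cast <;> omega

lemma dyck_length_even {l : List Bool} (h : dyckHeight l = 0) :
    l.length = 2 * l.count false := by
  have := dyck_length_eq l
  rw [h, zero_add] at this
  exact_mod_cast this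

@[simp] lemma pathLen_nil : pathLen [] = 0 := rfl
@[simp] lemma pathLen_cons (x : SchStep) (l : List SchStep) :
    pathLen (x :: l) = x.len + pathLen l := by simp [pathLen]
@[simp] lemma pathLen_append (l1 l2 : List SchStep) :
    pathLen (l1 ++ l2) = pathLen l1 + pathLen l2 := by simp [pathLen]

lemma length_le_pathLen (p : List SchStep) : p.length ≤ pathLen p := by
  induction p with
  | nil => simp
  | cons x t ih =>
    have : 1 ≤ x.len := by cases x <;> simp [SchStep.len]
    simp only [List.length_cons, pathLen_cons]
    omega

lemma schroeder_length_eq (p : List SchStep) :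
    (pathLen p : ℤ) = pathHeight p +
      2 * (p.count SchStep.down + p.count SchStep.horiz) := by
  induction p with
  | nil => simp [pathHeight]
  | cons x t ih =>
    rw [ph_eq] at ih ⊢
    cases x <;>
      simp [wsum_cons, List.count_cons, SchStep.rise, SchStep.len] <;>
      push_cast <;> omega

lemma schroeder_len_even {p : List SchStep} (h : pathHeight p = 0) :
    pathLen p = 2 * (p.count SchStep.down + p.count SchStep.horiz) := by
  have := schroeder_length_eq p
  rw [h, zero_add] at this
  exact_mod_cast this

/-! #### Dyck compose / decompose -/

lemma isDyck_compose {A B : List Bool} (hA : IsDyck A) (hB : IsDyck B) :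
    IsDyck (true :: (A ++ false :: B)) := by
  rw [isDyck_iff] at hA hB ⊢
  obtain ⟨hA0, hA1⟩ := hA
  obtain ⟨hB0, hB1⟩ := hB
  constructor
  · rw [dh_eq] at *
    simp [dw]
    omega
  · intro i
    rcases Nat.eq_zero_or_pos i with rfl | hi
    · simp [dyckHeight]
    rcases Nat.lt_or_ge i (A.length + 2) with h2 | h2
    · rw [dh_eq, wtake_cons_mid dw _ _ _ _ hi (by omega)]
      have := hA1 (i - 1)
      rw [dh_eq] at this
      simp [dw]
      omega
    · rw [dh_eq, wtake_cons_right dw _ _ _ _ h2]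
      have := hB1 (i - (A.length + 2))
      rw [dh_eq] at this
      rw [dh_eq] at hA0
      simp [dw]
      omega

lemma isDyck_decompose {p : List Bool} (hp : IsDyck p) (hne : p ≠ []) :
    ∃ A B, p = true :: (A ++ false :: B) ∧ IsDyck A ∧ IsDyck B := by
  obtain ⟨b, t, rfl⟩ : ∃ b t, p = b :: t := by
    cases p with
    | nil => exact absurd rfl hne
    | cons b t => exact ⟨b, t, rfl⟩
  have hb : b = true := by
    have := hp.2 [b] ⟨t, rfl⟩
    cases b
    · simp [dh_eq, wsum, dw] at this
    · rfl
  subst hb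
  have ht : wsum dw t = -1 := by
    have := hp.1
    rw [dh_eq] at this
    simp [dw] at this
    omega
  obtain ⟨A, x, B, rfl, hpre, hdrop⟩ := exists_first_drop dw t (by omega)
  have hA0 : wsum dw A = 0 := by
    have h1 := hpre A List.prefix_rfl
    rcases dw_mem x with h | h <;> simp [h] at hdrop <;> omega
  have hx : x = false := by
    cases x
    · rfl
    · simp [dw, hA0] at hdrop
  subst hx
  refine ⟨A, B, rfl, ?_, ?_⟩
  · exact ⟨by rw [dh_eq]; exact hA0, fun q hq => hpre q hq⟩
  · constructor
    · rw [dh_eq]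
      simp [dw, hA0] at ht ⊢
      omega
    · intro q hq
      obtain ⟨s, rfl⟩ := hq
      have : true :: (A ++ false :: q) <+: true :: (A ++ false :: (q ++ s)) :=
        ⟨s, by simp⟩
      have h2 := hp.2 _ this
      rw [dh_eq] at h2 ⊢
      simp [dw, hA0] at h2 ⊢
      omega

lemma compose_unique (w : α → ℤ) {u d : α} {A B A' B' : List α}
    (h : u :: (A ++ d :: B) = u :: (A' ++ d :: B'))
    (hA1 : ∀ q, q <+: A → 0 ≤ wsum w q) (hA0 : wsum w A = 0)
    (hA1' : ∀ q, q <+: A' → 0 ≤ wsum w q) (hA0' : wsum w A' = 0)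
    (hd : w d = -1) :
    A = A' ∧ B = B' := by
  have h' : A ++ d :: B = A' ++ d :: B' := by injection h
  have := first_drop_unique w h' hA1 (by simp [hd, hA0]) hA1' (by simp [hd, hA0'])
  exact ⟨this.1, this.2.2⟩

lemma dyck_decomp_unique {A B A' B' : List Bool}
    (h : true :: (A ++ false :: B) = true :: (A' ++ false :: B'))
    (hA : IsDyck A) (hA' : IsDyck A') : A = A' ∧ B = B' := by
  refine compose_unique dw h (fun q hq => hA.2 q hq) ?_ (fun q hq => hA'.2 q hq) ?_ ?_
  · rw [← dh_eq]; exact hA.1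
  · rw [← dh_eq]; exact hA'.1
  · simp [dw]

/-! #### Schröder compose / decompose -/

lemma isBig_compose {A B : List SchStep} (hA : IsBigSchroeder A) (hB : IsBigSchroeder B) :
    IsBigSchroeder (SchStep.up :: (A ++ SchStep.down :: B)) := by
  rw [isBig_iff] at hA hB ⊢
  obtain ⟨hA0, hA1⟩ := hA
  obtain ⟨hB0, hB1⟩ := hB
  constructor
  · rw [ph_eq] at *
    simp [SchStep.rise]
    omega
  · intro i
    rcases Nat.eq_zero_or_pos i with rfl | hi
    · simp [pathHeight]
    rcases Nat.lt_or_ge i (A.length + 2) with h2 | h2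
    · rw [ph_eq, wtake_cons_mid _ _ _ _ _ hi (by omega)]
      have := hA1 (i - 1)
      rw [ph_eq] at this
      simp [SchStep.rise]
      omega
    · rw [ph_eq, wtake_cons_right _ _ _ _ _ h2]
      have := hB1 (i - (A.length + 2))
      rw [ph_eq] at this
      rw [ph_eq] at hA0
      simp [SchStep.rise]
      omega

lemma isLittle_iff (p : List SchStep) :
    IsLittleSchroeder p ↔ IsBigSchroeder p ∧
      ∀ m, p[m]? = some SchStep.horiz → pathHeight (p.take m) ≠ 0 := by
  constructor
  · rintro ⟨hb, hl⟩
    refine ⟨hb, fun m hm => ?_⟩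
    obtain ⟨heq, hlen⟩ := getq_split' hm
    have := hl _ _ heq
    exact this
  · rintro ⟨hb, hl⟩
    refine ⟨hb, fun q r heq => ?_⟩
    have h1 : p[q.length]? = some SchStep.horiz := getq_split heq
    have h2 := hl _ h1
    rwa [heq, List.take_left] at h2

lemma isLittle_compose {A B : List SchStep} (hA : IsBigSchroeder A)
    (hB : IsLittleSchroeder B) :
    IsLittleSchroeder (SchStep.up :: (A ++ SchStep.down :: B)) := by
  rw [isLittle_iff] at hB ⊢
  obtain ⟨hBb, hBl⟩ := hB
  refine ⟨isBig_compose hA hBb, fun m hm => ?_⟩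
  rcases Nat.eq_zero_or_pos m with rfl | hm0
  · rw [getq_cons_zero] at hm
    exact absurd (Option.some_inj.mp hm) (by simp)
  rcases Nat.lt_or_ge m (A.length + 1) with h2 | h2
  · rw [getq_cons_mid _ _ _ _ hm0 (by omega)] at hm
    rw [ph_eq, wtake_cons_mid _ _ _ _ _ hm0 (by omega)]
    have := (isBig_iff A).mp hA |>.2 (m - 1)
    rw [ph_eq] at this
    simp [SchStep.rise]
    omega
  rcases Nat.eq_or_lt_of_le h2 with h3 | h3
  · rw [← h3, getq_cons_close] at hm
    exact absurd (Option.some_inj.mp hm) (by simp)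
  · have h4 : A.length + 2 ≤ m := by omega
    rw [getq_cons_right _ _ _ _ h4] at hm
    have := hBl _ hm
    rw [ph_eq, wtake_cons_right _ _ _ _ _ h4]
    rw [ph_eq] at this
    have hA0 := hA.1
    rw [ph_eq] at hA0
    simp [SchStep.rise]
    omega

lemma isLittle_decompose {p : List SchStep} (hp : IsLittleSchroeder p) (hne : p ≠ []) :
    ∃ A B, p = SchStep.up :: (A ++ SchStep.down :: B) ∧
      IsBigSchroeder A ∧ IsLittleSchroeder B := by
  obtain ⟨s, t, rfl⟩ : ∃ s t, p = s :: t := by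
    cases p with
    | nil => exact absurd rfl hne
    | cons s t => exact ⟨s, t, rfl⟩
  have hs : s = SchStep.up := by
    have h1 := hp.1.2 [s] ⟨t, rfl⟩
    cases s
    · rfl
    · simp [ph_eq, wsum, SchStep.rise] at h1
    · exact absurd (hp.2 [] t rfl) (by simp [pathHeight])
  subst hs
  have ht : wsum SchStep.rise t = -1 := by
    have := hp.1.1
    rw [ph_eq] at this
    simp [SchStep.rise] at this
    omega
  obtain ⟨A, x, B, rfl, hpre, hdrop⟩ := exists_first_drop SchStep.rise t (by omega)
  have hApre := hpre A List.prefix_rfl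
  have hA0 : wsum SchStep.rise A = 0 ∧ SchStep.rise x = -1 := by
    rcases rise_cases x with h | h | h <;> simp [h] at hdrop ⊢ <;> omega
  have hx : x = SchStep.down := by
    cases x
    · simp [SchStep.rise] at hA0
    · rfl
    · simp [SchStep.rise] at hA0
  subst hx
  have hAbig : IsBigSchroeder A := ⟨by rw [ph_eq]; exact hA0.1, fun q hq => hpre q hq⟩
  refine ⟨A, B, rfl, hAbig, ?_⟩
  have hBbig : IsBigSchroeder B := by
    constructor
    · rw [ph_eq]
      simp [SchStep.rise, hA0.1] at ht ⊢
      omega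
    · intro q hq
      obtain ⟨s', rfl⟩ := hq
      have hpr : SchStep.up :: (A ++ SchStep.down :: q) <+:
          SchStep.up :: (A ++ SchStep.down :: (q ++ s')) := ⟨s', by simp⟩
      have h2 := hp.1.2 _ hpr
      rw [ph_eq] at h2 ⊢
      simp [SchStep.rise, hA0.1] at h2 ⊢
      omega
  rw [isLittle_iff]
  refine ⟨hBbig, fun m hm => ?_⟩
  have hploc : (SchStep.up :: (A ++ SchStep.down :: B))[A.length + 2 + m]? =
      some SchStep.horiz := by
    rw [getq_cons_right _ _ _ _ (by omega)]
    simpa using hm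
  have := (isLittle_iff _).mp hp |>.2 _ hploc
  rw [ph_eq, wtake_cons_right _ _ _ _ _ (by omega)] at this
  have hidx : A.length + 2 + m - (A.length + 2) = m := by omega
  rw [hidx] at this
  rw [ph_eq]
  intro hc
  apply this
  simp [SchStep.rise, hA0.1, hc]

lemma big_decomp_unique {A B A' B' : List SchStep}
    (h : SchStep.up :: (A ++ SchStep.down :: B) =
      SchStep.up :: (A' ++ SchStep.down :: B'))
    (hA : IsBigSchroeder A) (hA' : IsBigSchroeder A') : A = A' ∧ B = B' := by
  refine compose_unique SchStep.rise h (fun q hq => hA.2 q hq) ?_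
    (fun q hq => hA'.2 q hq) ?_ ?_
  · rw [← ph_eq]; exact hA.1
  · rw [← ph_eq]; exact hA'.1
  · simp [SchStep.rise]

/-! #### ground flats -/

def HasGF (p : List SchStep) : Prop :=
  ∃ q r, p = q ++ SchStep.horiz :: r ∧ pathHeight q = 0

lemma little_iff_not_GF {p : List SchStep} (hp : IsBigSchroeder p) :
    IsLittleSchroeder p ↔ ¬ HasGF p := by
  unfold IsLittleSchroeder HasGF
  constructor
  · rintro ⟨-, h⟩ ⟨q, r, heq, h0⟩
    exact h q r heq h0
  · intro h
    refine ⟨hp, fun q r heq h0 => h ⟨q, r, heq, h0⟩⟩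

lemma GF_compose {q r : List SchStep} (hq : IsLittleSchroeder q)
    (hr : IsBigSchroeder r) :
    IsBigSchroeder (q ++ SchStep.horiz :: r) ∧ HasGF (q ++ SchStep.horiz :: r) := by
  have hq0 := hq.1.1
  constructor
  · rw [isBig_iff]
    constructor
    · rw [ph_eq] at *
      simp [SchStep.rise]
      have := hr.1
      rw [ph_eq] at this
      omega
    · intro i
      rcases Nat.lt_or_ge i (q.length + 1) with h2 | h2
      · rw [ph_eq, wtake_app_left _ (by omega)]
        exact (isBig_iff q).mp hq.1 |>.2 i
      · rw [ph_eq, wtake_app_right _ h2]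
        have := (isBig_iff r).mp hr |>.2 (i - (q.length + 1))
        rw [ph_eq] at this
        rw [ph_eq] at hq0
        simp [SchStep.rise]
        omega
  · exact ⟨q, r, rfl, hq0⟩

lemma GF_decompose {p : List SchStep} (hp : IsBigSchroeder p) (hgf : HasGF p) :
    ∃ q r, p = q ++ SchStep.horiz :: r ∧ IsLittleSchroeder q ∧ IsBigSchroeder r := by
  classical
  obtain ⟨q0, r0, heq0, h00⟩ := hgf
  have hex : ∃ m, p[m]? = some SchStep.horiz ∧ pathHeight (p.take m) = 0 :=
    ⟨q0.length, getq_split heq0, by rw [heq0, List.take_left]; exact h00⟩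
  obtain ⟨m, ⟨hm1, hm2⟩, hmin⟩ : ∃ m, (p[m]? = some SchStep.horiz ∧
      pathHeight (p.take m) = 0) ∧ ∀ j, j < m →
        ¬ (p[j]? = some SchStep.horiz ∧ pathHeight (p.take j) = 0) :=
    ⟨Nat.find hex, Nat.find_spec hex, fun j hj => Nat.find_min hex hj⟩
  obtain ⟨heq, hlen⟩ := getq_split' hm1
  refine ⟨p.take m, p.drop (m + 1), heq, ?_, ?_⟩
  · rw [isLittle_iff]
    constructor
    · rw [isBig_iff]
      refine ⟨hm2, fun i => ?_⟩
      rw [List.take_take]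
      exact (isBig_iff p).mp hp |>.2 _
    · intro j hj
      have hjm : j < m := by
        have : j < (p.take m).length := by
          by_contra hge
          rw [List.getElem?_eq_none (by omega)] at hj
          exact absurd hj (by simp)
        omega
      have hpj : p[j]? = some SchStep.horiz := by
        rwa [List.getElem?_take_of_lt hjm] at hj
      intro h0
      refine hmin j hjm ⟨hpj, ?_⟩
      rwa [List.take_take, Nat.min_eq_left hjm.le] at h0
  · constructor
    · have h1 := hp.1
      conv at h1 => rw [heq]
      rw [ph_eq] at h1 hm2 ⊢
      simp [SchStep.rise] at h1
      omega
    · intro s hs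
      obtain ⟨s', hs'⟩ := hs
      have hpr : p.take m ++ SchStep.horiz :: s <+: p := by
        conv_rhs => rw [heq]
        exact ⟨s', by rw [← hs']; simp⟩
      have h2 := hp.2 _ hpr
      rw [ph_eq] at h2 ⊢
      rw [ph_eq] at hm2
      simp [SchStep.rise] at h2
      omega

lemma GF_unique {q r q' r' : List SchStep}
    (h : q ++ SchStep.horiz :: r = q' ++ SchStep.horiz :: r')
    (hq : IsLittleSchroeder q) (hq' : IsLittleSchroeder q') : q = q' ∧ r = r' := by
  have key : ∀ {a b a' b' : List SchStep},
      a ++ SchStep.horiz :: b = a' ++ SchStep.horiz :: b' →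
      IsLittleSchroeder a → IsLittleSchroeder a' → a.length < a'.length → False := by
    intro a b a' b' heq ha ha' hlt
    have h1 : (a ++ SchStep.horiz :: b)[a.length]? = some SchStep.horiz :=
      getq_split rfl
    rw [heq] at h1
    have h2 : a'[a.length]? = some SchStep.horiz := by
      rwa [List.getElem?_append_left hlt] at h1
    have h3 := (isLittle_iff a').mp ha' |>.2 _ h2
    apply h3
    have h4 : a'.take a.length = a := by
      have : (a' ++ SchStep.horiz :: b').take a.length = a'.take a.length :=
        List.take_append_of_le_length (by omega)
      rw [← heq, List.take_append_of_le_length le_rfl, List.take_length] at this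
      exact this.symm
    rw [h4]
    exact ha.1.1
  have hlen : q.length = q'.length := by
    by_contra hne
    rcases Nat.lt_or_ge q.length q'.length with h1 | h1
    · exact key h hq hq' h1
    · exact key h.symm hq' hq (by omega)
  have hqq : q = q' := by
    have := congrArg (List.take q.length) h
    rwa [List.take_append_of_le_length le_rfl, List.take_length,
      List.take_append_of_le_length (by omega), hlen, List.take_length] at this
  subst hqq
  exact ⟨rfl, by injection List.append_cancel_left h⟩

/-! ### Marked Dyck paths -/

open Finset in
def markUp (SA SB : Finset ℕ) (c : ℕ) (ε : Bool) : Finset ℕ :=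
  SA.image (· + 1) ∪ SB.image (· + (c + 2)) ∪ (if ε then {c + 1} else ∅)

def Special (par : ℤ) (ps : List Bool × Finset ℕ) : Prop :=
  IsDyck ps.1 ∧
    ∀ i ∈ ps.2, i < ps.1.length ∧ ps.1.getD i true = false ∧
      dyckHeight (ps.1.take i) % 2 = par

lemma isOddSpecial_iff (ps : List Bool × Finset ℕ) :
    IsOddSpecial ps ↔ Special 1 ps := Iff.rfl

lemma mem_markUp {SA SB : Finset ℕ} {c : ℕ} {ε : Bool} {j : ℕ} :
    j ∈ markUp SA SB c ε ↔
      (∃ i ∈ SA, i + 1 = j) ∨ (∃ i ∈ SB, i + (c + 2) = j) ∨ (ε = true ∧ j = c + 1) := by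
  unfold markUp
  cases ε <;> simp [Finset.mem_union, Finset.mem_image] <;> aesop

lemma card_markUp {SA SB : Finset ℕ} {c : ℕ} {ε : Bool}
    (hSA : ∀ i ∈ SA, i < c) :
    (markUp SA SB c ε).card = SA.card + SB.card + (if ε then 1 else 0) := by
  unfold markUp
  rw [Finset.card_union_of_disjoint, Finset.card_union_of_disjoint,
    Finset.card_image_of_injective _ (add_left_injective 1),
    Finset.card_image_of_injective _ (add_left_injective (c+2))]
  · cases ε <;> simp
  · rw [Finset.disjoint_left]
    intro a ha hb
    simp only [Finset.mem_image] at ha hb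
    obtain ⟨i, hi, rfl⟩ := ha
    obtain ⟨i', hi', h'⟩ := hb
    have := hSA i hi
    omega
  · rw [Finset.disjoint_left]
    intro a ha hb
    have hval : a = c + 1 := by
      cases ε
      · simp at hb
      · simpa using hb
    subst hval
    rcases Finset.mem_union.mp ha with h | h <;>
      simp only [Finset.mem_image] at h <;> obtain ⟨i, hi, hival⟩ := h
    · have := hSA i hi
      omega
    · omega

lemma markUp_inj {SA SB SA' SB' : Finset ℕ} {c : ℕ} {ε ε' : Bool}
    (hSA : ∀ i ∈ SA, i < c) (hSA' : ∀ i ∈ SA', i < c)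
    (h : markUp SA SB c ε = markUp SA' SB' c ε') :
    SA = SA' ∧ SB = SB' ∧ ε = ε' := by
  have key1 : ∀ (T T' : Finset ℕ) (e : Bool), (∀ i ∈ T, i < c) →
      ∀ i, i < c → (i + 1 ∈ markUp T T' c e ↔ i ∈ T) := by
    intro T T' e hT i hic
    rw [mem_markUp]
    constructor
    · rintro (⟨a, ha, hval⟩ | ⟨a, ha, hval⟩ | ⟨-, hval⟩)
      · have : a = i := by omega
        subst this; exact ha
      · exfalso; omega
      · exfalso; omega
    · intro hi
      exact Or.inl ⟨i, hi, rfl⟩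
  have key2 : ∀ (T T' : Finset ℕ) (e : Bool), (∀ i ∈ T, i < c) →
      ∀ i, (i + (c + 2) ∈ markUp T T' c e ↔ i ∈ T') := by
    intro T T' e hT i
    rw [mem_markUp]
    constructor
    · rintro (⟨a, ha, hval⟩ | ⟨a, ha, hval⟩ | ⟨-, hval⟩)
      · exfalso; have := hT a ha; omega
      · have : a = i := by omega
        subst this; exact ha
      · exfalso; omega
    · intro hi
      exact Or.inr (Or.inl ⟨i, hi, rfl⟩)
  have key3 : ∀ (T T' : Finset ℕ) (e : Bool), (∀ i ∈ T, i < c) →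
      (c + 1 ∈ markUp T T' c e ↔ e = true) := by
    intro T T' e hT
    rw [mem_markUp]
    constructor
    · rintro (⟨a, ha, hval⟩ | ⟨a, ha, hval⟩ | ⟨he, -⟩)
      · have := hT a ha; omega
      · omega
      · exact he
    · intro he
      exact Or.inr (Or.inr ⟨he, rfl⟩)
  refine ⟨?_, ?_, ?_⟩
  · ext i
    by_cases hic : i < c
    · rw [← key1 SA SB ε hSA i hic, ← key1 SA' SB' ε' hSA' i hic, h]
    · constructor
      · intro hi; exact absurd (hSA i hi) hic
      · intro hi; exact absurd (hSA' i hi) hic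
  · ext i
    rw [← key2 SA SB ε hSA i, ← key2 SA' SB' ε' hSA' i, h]
  · have := key3 SA SB ε hSA
    rw [h, key3 SA' SB' ε' hSA'] at this
    cases ε <;> cases ε' <;> simp_all

lemma getD_eq (l : List Bool) (j : ℕ) : l.getD j true = (l[j]?).getD true :=
  List.getD_eq_getElem?_getD

lemma special_compose {par : ℤ} (hpar : par = 0 ∨ par = 1)
    {A B : List Bool} {SA SB : Finset ℕ} {ε : Bool}
    (hA : Special (1 - par) (A, SA)) (hB : Special par (B, SB))
    (hε : ε = true → par = 1) :
    Special par (true :: (A ++ false :: B), markUp SA SB A.length ε) := by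
  obtain ⟨hAd, hAm⟩ := hA
  obtain ⟨hBd, hBm⟩ := hB
  dsimp only at hAd hAm hBd hBm
  have hA0 : wsum dw A = 0 := by rw [← dh_eq]; exact hAd.1
  refine ⟨isDyck_compose hAd hBd, fun j hj => ?_⟩
  dsimp only at hj ⊢
  have hlen : (true :: (A ++ false :: B)).length = A.length + B.length + 2 := by
    simp only [List.length_cons, List.length_append]
    omega
  rw [mem_markUp] at hj
  rcases hj with ⟨i, hi, rfl⟩ | ⟨i, hi, rfl⟩ | ⟨he, rfl⟩
  · obtain ⟨hi1, hi2, hi3⟩ := hAm i hi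
    refine ⟨by omega, ?_, ?_⟩
    · rw [getD_eq, getq_cons_mid _ _ _ _ (by omega) (by omega)]
      rw [getD_eq] at hi2
      simpa using hi2
    · rw [dh_eq, wtake_cons_mid dw _ _ _ _ (by omega) (by omega)]
      rw [dh_eq] at hi3
      simp only [Nat.add_sub_cancel]
      simp [dw]
      omega
  · obtain ⟨hi1, hi2, hi3⟩ := hBm i hi
    refine ⟨by omega, ?_, ?_⟩
    · rw [getD_eq, getq_cons_right _ _ _ _ (by omega)]
      rw [getD_eq] at hi2
      have : i + (A.length + 2) - (A.length + 2) = i := by omega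
      rw [this]
      exact hi2
    · rw [dh_eq, wtake_cons_right dw _ _ _ _ (by omega)]
      rw [dh_eq] at hi3
      have : i + (A.length + 2) - (A.length + 2) = i := by omega
      rw [this]
      simp [dw, hA0]
      omega
  · have hp1 : par = 1 := hε he
    refine ⟨by omega, ?_, ?_⟩
    · rw [getD_eq, getq_cons_close]
      rfl
    · rw [dh_eq, wtake_cons_mid dw _ _ _ _ (by omega) (by omega)]
      simp only [Nat.add_sub_cancel, List.take_length, hA0]
      simp [dw]
      omega

lemma special_decompose {par : ℤ} (hpar : par = 0 ∨ par = 1)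
    {ps : List Bool × Finset ℕ} (hps : Special par ps) (hne : ps.1 ≠ []) :
    ∃ A B SA SB ε, ps.1 = true :: (A ++ false :: B) ∧
      ps.2 = markUp SA SB A.length ε ∧
      Special (1 - par) (A, SA) ∧ Special par (B, SB) ∧
      (ε = true → par = 1) ∧ (∀ i ∈ SA, i < A.length) ∧
      ps.2.card = SA.card + SB.card + (if ε then 1 else 0) := by
  classical
  obtain ⟨hd, hm⟩ := hps
  obtain ⟨A, B, hpeq, hAd, hBd⟩ := isDyck_decompose hd hne
  have hA0 : wsum dw A = 0 := by rw [← dh_eq]; exact hAd.1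
  set S := ps.2 with hSdef
  have hS1 : ∀ j ∈ S, 1 ≤ j := by
    intro j hj
    by_contra h0
    push_neg at h0
    interval_cases j
    have := (hm 0 hj).2.1
    rw [hpeq] at this
    simp at this
  -- every mark is a genuine downstep position
  have hmark : ∀ j ∈ S, j < A.length + B.length + 2 ∧
      ((true :: (A ++ false :: B)).getD j true = false) ∧
      dyckHeight ((true :: (A ++ false :: B)).take j) % 2 = par := by
    intro j hj
    have := hm j hj
    rw [hpeq] at this
    simp at this
    exact ⟨by omega, this.2⟩
  refine ⟨A, B, (S.filter (· ≤ A.length)).image (· - 1),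
    (S.filter (fun i => A.length + 2 ≤ i)).image (fun i => i - (A.length + 2)),
    decide ((A.length + 1) ∈ S), hpeq, ?_, ?_, ?_, ?_, ?_, ?_⟩
  · -- S = markUp ...
    ext j
    rw [mem_markUp]
    simp only [Finset.mem_image, Finset.mem_filter, decide_eq_true_eq]
    constructor
    · intro hj
      have h1 := hS1 j hj
      rcases Nat.lt_or_ge j (A.length + 1) with h2 | h2
      · exact Or.inl ⟨j - 1, ⟨j, ⟨hj, by omega⟩, rfl⟩, by omega⟩
      rcases Nat.eq_or_lt_of_le h2 with h3 | h3
      · exact Or.inr (Or.inr ⟨by rw [← h3] at hj; exact hj, by omega⟩)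
      · exact Or.inr (Or.inl ⟨j - (A.length + 2), ⟨j, ⟨hj, by omega⟩, rfl⟩, by omega⟩)
    · rintro (⟨i, ⟨a, ⟨ha, hale⟩, rfl⟩, hval⟩ | ⟨i, ⟨a, ⟨ha, hale⟩, rfl⟩, hval⟩ |
        ⟨hc1, rfl⟩)
      · have := hS1 a ha
        have : a - 1 + 1 = a := by omega
        rw [← hval, this]
        exact ha
      · have : a - (A.length + 2) + (A.length + 2) = a := by omega
        rw [← hval, this]
        exact ha
      · exact hc1
  · -- Special (1 - par) (A, SA)
    refine ⟨hAd, fun i hi => ?_⟩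
    dsimp only at hi ⊢
    simp only [Finset.mem_image, Finset.mem_filter] at hi
    obtain ⟨a, ⟨ha, hale⟩, rfl⟩ := hi
    have h1 := hS1 a ha
    obtain ⟨hm1, hm2, hm3⟩ := hmark a ha
    refine ⟨by omega, ?_, ?_⟩
    · rw [getD_eq]
      rw [getD_eq, getq_cons_mid _ _ _ _ (by omega) (by omega)] at hm2
      exact hm2
    · rw [dh_eq, wtake_cons_mid dw _ _ _ _ (by omega) (by omega)] at hm3
      rw [dh_eq]
      simp [dw] at hm3
      omega
  · -- Special par (B, SB)
    refine ⟨hBd, fun i hi => ?_⟩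
    dsimp only at hi ⊢
    simp only [Finset.mem_image, Finset.mem_filter] at hi
    obtain ⟨a, ⟨ha, hale⟩, rfl⟩ := hi
    obtain ⟨hm1, hm2, hm3⟩ := hmark a ha
    refine ⟨by omega, ?_, ?_⟩
    · rw [getD_eq]
      rw [getD_eq, getq_cons_right _ _ _ _ (by omega)] at hm2
      exact hm2
    · rw [dh_eq, wtake_cons_right dw _ _ _ _ (by omega)] at hm3
      rw [dh_eq]
      simp [dw, hA0] at hm3
      omega
  · -- ε → par = 1
    intro he
    rw [decide_eq_true_eq] at he
    obtain ⟨hm1, hm2, hm3⟩ := hmark (A.length + 1) he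
    rw [dh_eq, wtake_cons_mid dw _ _ _ _ (by omega) (by omega)] at hm3
    simp only [Nat.add_sub_cancel] at hm3
    rw [List.take_length, hA0] at hm3
    simp [dw] at hm3
    omega
  · -- bounds
    intro i hi
    simp only [Finset.mem_image, Finset.mem_filter] at hi
    obtain ⟨a, ⟨ha, hale⟩, rfl⟩ := hi
    have := hS1 a ha
    omega
  · -- card
    have hb : ∀ i ∈ (S.filter (· ≤ A.length)).image (· - 1), i < A.length := by
      intro i hi
      simp only [Finset.mem_image, Finset.mem_filter] at hi
      obtain ⟨a, ⟨ha, hale⟩, rfl⟩ := hi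
      have := hS1 a ha
      omega
    -- reuse the ext proof: S = markUp ...
    have hSeq : S = markUp ((S.filter (· ≤ A.length)).image (· - 1))
        ((S.filter (fun i => A.length + 2 ≤ i)).image (fun i => i - (A.length + 2))) A.length
        (decide ((A.length + 1) ∈ S)) := by
      ext j
      rw [mem_markUp]
      simp only [Finset.mem_image, Finset.mem_filter, decide_eq_true_eq]
      constructor
      · intro hj
        have h1 := hS1 j hj
        rcases Nat.lt_or_ge j (A.length + 1) with h2 | h2
        · exact Or.inl ⟨j - 1, ⟨j, ⟨hj, by omega⟩, rfl⟩, by omega⟩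
        rcases Nat.eq_or_lt_of_le h2 with h3 | h3
        · exact Or.inr (Or.inr ⟨by rw [← h3] at hj; exact hj, by omega⟩)
        · exact Or.inr (Or.inl ⟨j - (A.length + 2), ⟨j, ⟨hj, by omega⟩, rfl⟩, by omega⟩)
      · rintro (⟨i, ⟨a, ⟨ha, hale⟩, rfl⟩, hval⟩ | ⟨i, ⟨a, ⟨ha, hale⟩, rfl⟩, hval⟩ |
          ⟨hc1, rfl⟩)
        · have := hS1 a ha
          have h5 : a - 1 + 1 = a := by omega
          rw [← hval, h5]
          exact ha
        · have h5 : a - (A.length + 2) + (A.length + 2) = a := by omega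
          rw [← hval, h5]
          exact ha
        · exact hc1
    conv_lhs => rw [hSeq]
    exact card_markUp hb

/-! ### Finiteness -/

lemma finite_list_len_le (α : Type*) [Finite α] (N : ℕ) :
    Finite {l : List α // l.length ≤ N} := by
  classical
  haveI := Fintype.ofFinite α
  have hinj : Function.Injective
      (fun l : {l : List α // l.length ≤ N} => (fun i : Fin (N+1) => l.1[i.1]?)) := by
    intro l1 l2 h
    apply Subtype.ext
    apply List.ext_getElem?
    intro i
    by_cases hi : i < N + 1
    · exact congrFun h ⟨i, hi⟩
    · rw [List.getElem?_eq_none (by omega), List.getElem?_eq_none (by omega)]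
  exact Finite.of_injective _ hinj

instance : Fintype SchStep :=
  ⟨{SchStep.up, SchStep.down, SchStep.horiz}, by intro x; cases x <;> decide⟩

lemma finite_marked (P : List Bool × Finset ℕ → Prop) (N : ℕ)
    (hP : ∀ ps, P ps → ps.1.length ≤ N ∧ ∀ i ∈ ps.2, i < N) :
    Finite {ps // P ps} := by
  haveI := finite_list_len_le Bool N
  have hinj : Function.Injective (fun x : {ps // P ps} =>
      ((⟨x.1.1, (hP _ x.2).1⟩ : {l : List Bool // l.length ≤ N}),
       (⟨x.1.2, by
          rw [Finset.mem_powerset]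
          intro i hi
          rw [Finset.mem_range]
          exact (hP _ x.2).2 i hi⟩ : ((Finset.range N).powerset : Finset (Finset ℕ))))) := by
    intro x y h
    obtain ⟨h1, h2⟩ := Prod.mk.injEq .. ▸ h
    apply Subtype.ext
    exact Prod.ext (congrArg Subtype.val h1) (congrArg Subtype.val h2)
  exact Finite.of_injective _ hinj

lemma finite_sch (P : List SchStep → Prop) (N : ℕ)
    (hP : ∀ p, P p → p.length ≤ N) :
    Finite {p // P p} := by
  haveI := finite_list_len_le SchStep N
  apply Finite.of_injective
    (fun x : {p // P p} => (⟨x.1, hP _ x.2⟩ : {l : List SchStep // l.length ≤ N}))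
  intro x y h
  have h2 := congrArg Subtype.val h
  exact Subtype.ext h2

/-! ### The counted sets -/

def MSet (n k : ℕ) :=
  {ps : List Bool × Finset ℕ // IsOddSpecial ps ∧ ps.1.length = 2*n ∧ ps.2.card = k}

def ESet (n k : ℕ) :=
  {ps : List Bool × Finset ℕ // Special 0 ps ∧ ps.1.length = 2*n ∧ ps.2.card = k}

def BSet (n k : ℕ) :=
  {p : List SchStep // IsBigSchroeder p ∧ pathLen p = 2*n ∧ p.count SchStep.horiz = k}

def LSet (n k : ℕ) :=
  {p : List SchStep // IsLittleSchroeder p ∧ pathLen p = 2*n ∧ p.count SchStep.horiz = k}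

instance (n k : ℕ) : Finite (MSet n k) := by
  apply finite_marked _ (2*n)
  rintro ps ⟨⟨-, hm⟩, hlen, -⟩
  exact ⟨le_of_eq hlen, fun i hi => hlen ▸ (hm i hi).1⟩

instance (n k : ℕ) : Finite (ESet n k) := by
  apply finite_marked _ (2*n)
  rintro ps ⟨⟨-, hm⟩, hlen, -⟩
  exact ⟨le_of_eq hlen, fun i hi => hlen ▸ (hm i hi).1⟩

instance (n k : ℕ) : Finite (BSet n k) := by
  apply finite_sch _ (2*n)
  rintro p ⟨-, hlen, -⟩
  exact hlen ▸ length_le_pathLen p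

instance (n k : ℕ) : Finite (LSet n k) := by
  apply finite_sch _ (2*n)
  rintro p ⟨-, hlen, -⟩
  exact hlen ▸ length_le_pathLen p

/-- pairs of marked Dyck paths -/
def PD (par1 par2 : ℤ) (n k : ℕ) :=
  {x : (List Bool × Finset ℕ) × (List Bool × Finset ℕ) //
    Special par1 x.1 ∧ Special par2 x.2 ∧
    x.1.1.length + x.2.1.length = 2*n ∧ x.1.2.card + x.2.2.card = k}

/-- pairs of Schröder paths -/
def PSch (P1 P2 : List SchStep → Prop) (n k : ℕ) :=
  {x : List SchStep × List SchStep // P1 x.1 ∧ P2 x.2 ∧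
    pathLen x.1 + pathLen x.2 = 2*n ∧
    x.1.count SchStep.horiz + x.2.count SchStep.horiz = k}

instance (par1 par2 : ℤ) (n k : ℕ) : Finite (PD par1 par2 n k) := by
  haveI h1 : Finite {ps : List Bool × Finset ℕ //
      ps.1.length ≤ 2*n ∧ ∀ i ∈ ps.2, i < 2*n} := by
    apply finite_marked _ (2*n)
    exact fun ps h => h
  apply Finite.of_injective (fun x : PD par1 par2 n k =>
    ((⟨x.1.1, by
        obtain ⟨⟨-, hm⟩, -, hlen, -⟩ := x.2
        exact ⟨by omega, fun i hi => by have := (hm i hi).1; omega⟩⟩ :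
      {ps : List Bool × Finset ℕ // ps.1.length ≤ 2*n ∧ ∀ i ∈ ps.2, i < 2*n}),
     (⟨x.1.2, by
        obtain ⟨-, ⟨-, hm⟩, hlen, -⟩ := x.2
        exact ⟨by omega, fun i hi => by have := (hm i hi).1; omega⟩⟩ :
      {ps : List Bool × Finset ℕ // ps.1.length ≤ 2*n ∧ ∀ i ∈ ps.2, i < 2*n})))
  intro x y h
  obtain ⟨h1, h2⟩ := Prod.mk.injEq .. ▸ h
  apply Subtype.ext
  exact Prod.ext (congrArg Subtype.val h1) (congrArg Subtype.val h2)

instance (P1 P2 : List SchStep → Prop) (n k : ℕ) : Finite (PSch P1 P2 n k) := by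
  haveI h1 := finite_list_len_le SchStep (2*n)
  apply Finite.of_injective (fun x : PSch P1 P2 n k =>
    ((⟨x.1.1, by
        obtain ⟨-, -, hlen, -⟩ := x.2
        have := length_le_pathLen x.1.1
        omega⟩ : {l : List SchStep // l.length ≤ 2*n}),
     (⟨x.1.2, by
        obtain ⟨-, -, hlen, -⟩ := x.2
        have := length_le_pathLen x.1.2
        omega⟩ : {l : List SchStep // l.length ≤ 2*n})))
  intro x y h
  obtain ⟨h1, h2⟩ := Prod.mk.injEq .. ▸ h
  apply Subtype.ext
  exact Prod.ext (congrArg Subtype.val h1) (congrArg Subtype.val h2)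

/-! ### Fibering a pair set over sizes -/

lemma nat_card_sigma {ι : Type*} [Fintype ι] (g : ι → Type*) [∀ i, Finite (g i)] :
    Nat.card (Σ i, g i) = ∑ i, Nat.card (g i) := by
  classical
  letI : ∀ i, Fintype (g i) := fun i => Fintype.ofFinite _
  simp only [Nat.card_eq_fintype_card]
  exact Fintype.card_sigma

lemma card_split {γ : Type*} (P Q : γ → Prop) [Finite {x // P x}] :
    Nat.card {x // P x} =
      Nat.card {x // P x ∧ Q x} + Nat.card {x // P x ∧ ¬ Q x} := by
  classical
  haveI : Finite {x // P x ∧ Q x} := by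
    apply Finite.of_injective (fun x : {x // P x ∧ Q x} => (⟨x.1, x.2.1⟩ : {x // P x}))
    intro a b h
    have h2 := congrArg Subtype.val h
    exact Subtype.ext h2
  haveI : Finite {x // P x ∧ ¬ Q x} := by
    apply Finite.of_injective
      (fun x : {x // P x ∧ ¬ Q x} => (⟨x.1, x.2.1⟩ : {x // P x}))
    intro a b h
    have h2 := congrArg Subtype.val h
    exact Subtype.ext h2
  rw [← Nat.card_sum]
  apply Nat.card_congr
  exact (Equiv.sumCompl (fun a : {x // P x} => Q a.1)).symm.trans
    (Equiv.sumCongr (Equiv.subtypeSubtypeEquivSubtypeInter P Q)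
      (Equiv.subtypeSubtypeEquivSubtypeInter P fun x => ¬ Q x))

lemma card_pair_sum {α β : Type*} (P1 : α → Prop) (P2 : β → Prop)
    (L1 C1 : α → ℕ) (L2 C2 : β → ℕ) (n k : ℕ)
    [Finite {x : α × β // P1 x.1 ∧ P2 x.2 ∧ L1 x.1 + L2 x.2 = 2*n ∧ C1 x.1 + C2 x.2 = k}]
    (hL1 : ∀ x, P1 x → L1 x % 2 = 0) (hL2 : ∀ y, P2 y → L2 y % 2 = 0) :
    Nat.card {x : α × β // P1 x.1 ∧ P2 x.2 ∧ L1 x.1 + L2 x.2 = 2*n ∧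
        C1 x.1 + C2 x.2 = k} =
      ∑ ab ∈ Finset.HasAntidiagonal.antidiagonal n, ∑ ij ∈ Finset.HasAntidiagonal.antidiagonal k,
        Nat.card {u : α // P1 u ∧ L1 u = 2*ab.1 ∧ C1 u = ij.1} *
        Nat.card {v : β // P2 v ∧ L2 v = 2*ab.2 ∧ C2 v = ij.2} := by
  classical
  set T := {x : α × β // P1 x.1 ∧ P2 x.2 ∧ L1 x.1 + L2 x.2 = 2*n ∧ C1 x.1 + C2 x.2 = k}
    with hT
  set s : Finset ((ℕ × ℕ) × (ℕ × ℕ)) :=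
    (Finset.HasAntidiagonal.antidiagonal n) ×ˢ (Finset.HasAntidiagonal.antidiagonal k) with hs
  let f0 : T → ((ℕ × ℕ) × (ℕ × ℕ)) := fun x =>
    ((L1 x.1.1 / 2, L2 x.1.2 / 2), (C1 x.1.1, C2 x.1.2))
  have hf0 : ∀ x : T, f0 x ∈ s := by
    intro x
    obtain ⟨h1, h2, h3, h4⟩ := x.2
    have e1 := hL1 _ h1
    have e2 := hL2 _ h2
    simp only [hs, Finset.mem_product, Finset.HasAntidiagonal.mem_antidiagonal, f0]
    omega
  let f : T → ↥s := fun x => ⟨f0 x, hf0 x⟩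
  have hcard : Nat.card T = ∑ v : ↥s, Nat.card {x : T // f x = v} := by
    rw [← nat_card_sigma]
    exact Nat.card_congr (Equiv.sigmaFiberEquiv f).symm
  have hval : ∀ v : ↥s, Nat.card {x : T // f x = v} =
      Nat.card {x : T // f0 x = v.1} := by
    intro v
    apply Nat.card_congr
    apply Equiv.subtypeEquivRight
    intro x
    constructor
    · intro h; exact congrArg Subtype.val h
    · intro h; exact Subtype.ext h
  rw [hcard]
  simp only [hval]
  rw [Finset.sum_coe_sort s (fun v => Nat.card {x : T // f0 x = v})]
  rw [hs, Finset.sum_product]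
  apply Finset.sum_congr rfl
  intro ab hab
  apply Finset.sum_congr rfl
  intro ij hij
  rw [Finset.HasAntidiagonal.mem_antidiagonal] at hab hij
  rw [← Nat.card_prod]
  apply Nat.card_congr
  apply Equiv.symm
  refine Equiv.ofBijective (fun uv => ⟨⟨(uv.1.1, uv.2.1), ?_⟩, ?_⟩) ⟨?_, ?_⟩
  · obtain ⟨hu1, hu2, hu3⟩ := uv.1.2
    obtain ⟨hv1, hv2, hv3⟩ := uv.2.2
    refine ⟨hu1, hv1, ?_, ?_⟩
    · show L1 uv.1.1 + L2 uv.2.1 = 2*n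
      omega
    · show C1 uv.1.1 + C2 uv.2.1 = k
      omega
  · obtain ⟨hu1, hu2, hu3⟩ := uv.1.2
    obtain ⟨hv1, hv2, hv3⟩ := uv.2.2
    show ((L1 uv.1.1 / 2, L2 uv.2.1 / 2), (C1 uv.1.1, C2 uv.2.1)) = (ab, ij)
    rw [hu2, hu3, hv2, hv3]
    rw [Nat.mul_div_cancel_left _ (by norm_num : 0 < 2),
      Nat.mul_div_cancel_left _ (by norm_num : 0 < 2)]
  · intro x y h
    have h' := congrArg (fun z : {x : T // f0 x = (ab, ij)} => z.1.1) h
    simp only at h'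
    obtain ⟨hx1, hx2⟩ := Prod.mk.injEq .. ▸ h'
    exact Prod.ext (Subtype.ext hx1) (Subtype.ext hx2)
  · rintro ⟨⟨⟨u, v⟩, ⟨h1, h2, h3, h4⟩⟩, hfib⟩
    dsimp only at h1 h2 h3 h4
    have e1 := hL1 _ h1
    have e2 := hL2 _ h2
    have hfib' : ((L1 u / 2, L2 v / 2), (C1 u, C2 v)) = (ab, ij) := hfib
    have ha : L1 u / 2 = ab.1 := by
      have := congrArg (fun z : (ℕ × ℕ) × ℕ × ℕ => z.1.1) hfib'; simpa using this
    have hb : L2 v / 2 = ab.2 := by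
      have := congrArg (fun z : (ℕ × ℕ) × ℕ × ℕ => z.1.2) hfib'; simpa using this
    have hi : C1 u = ij.1 := by
      have := congrArg (fun z : (ℕ × ℕ) × ℕ × ℕ => z.2.1) hfib'; simpa using this
    have hj : C2 v = ij.2 := by
      have := congrArg (fun z : (ℕ × ℕ) × ℕ × ℕ => z.2.2) hfib'; simpa using this
    refine ⟨(⟨u, h1, by omega, hi⟩, ⟨v, h2, by omega, hj⟩), ?_⟩
    apply Subtype.ext
    apply Subtype.ext
    rfl

/-! ### Decomposition bijections: Dyck side -/

def QMark (ps : List Bool × Finset ℕ) : Prop :=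
  ∃ A B, ps.1 = true :: (A ++ false :: B) ∧ IsDyck A ∧ (A.length + 1) ∈ ps.2

lemma qmark_iff_of_decomp {A B : List Bool} {S : Finset ℕ}
    (hA : IsDyck A) :
    QMark (true :: (A ++ false :: B), S) ↔ (A.length + 1) ∈ S := by
  constructor
  · rintro ⟨A', B', heq, hA', hmem⟩
    dsimp only at heq
    obtain ⟨h1, h2⟩ := dyck_decomp_unique heq hA hA'
    rwa [← h1] at hmem
  · intro h
    exact ⟨A, B, rfl, hA, h⟩

lemma mem_markUp_close {SA SB : Finset ℕ} {c : ℕ} {ε : Bool}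
    (hSA : ∀ i ∈ SA, i < c) :
    (c + 1) ∈ markUp SA SB c ε ↔ ε = true := by
  rw [mem_markUp]
  constructor
  · rintro (⟨a, ha, hval⟩ | ⟨a, ha, hval⟩ | ⟨he, -⟩)
    · have := hSA a ha; omega
    · omega
    · exact he
  · intro he
    exact Or.inr (Or.inr ⟨he, rfl⟩)

lemma card_dyck_master (par : ℤ) (hpar : par = 0 ∨ par = 1) (ε : Bool)
    (hε : ε = true → par = 1) (n k : ℕ) :
    Nat.card {ps : List Bool × Finset ℕ //
      (Special par ps ∧ ps.1.length = 2*(n+1) ∧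
        ps.2.card = k + (if ε then 1 else 0)) ∧ (QMark ps ↔ ε = true)} =
    Nat.card (PD (1-par) par n k) := by
  apply Nat.card_congr
  apply Equiv.symm
  apply Equiv.ofBijective (f := fun x : PD (1-par) par n k =>
    (⟨(true :: (x.1.1.1 ++ false :: x.1.2.1),
        markUp x.1.1.2 x.1.2.2 x.1.1.1.length ε), by
      obtain ⟨hA, hB, hlen, hcard⟩ := x.2
      have hbound : ∀ i ∈ x.1.1.2, i < x.1.1.1.length := fun i hi => (hA.2 i hi).1
      refine ⟨⟨special_compose hpar hA hB hε, ?_, ?_⟩, ?_⟩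
      · show (true :: (x.1.1.1 ++ false :: x.1.2.1)).length = 2*(n+1)
        simp only [List.length_cons, List.length_append]
        omega
      · show (markUp x.1.1.2 x.1.2.2 x.1.1.1.length ε).card = k + (if ε then 1 else 0)
        rw [card_markUp hbound]
        omega
      · show QMark (true :: (x.1.1.1 ++ false :: x.1.2.1),
          markUp x.1.1.2 x.1.2.2 x.1.1.1.length ε) ↔ ε = true
        rw [qmark_iff_of_decomp hA.1]
        exact mem_markUp_close hbound⟩))
  constructor
  · intro x y h
    have h' := congrArg Subtype.val h
    obtain ⟨hpath, hmark⟩ := Prod.mk.injEq .. ▸ h'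
    obtain ⟨hA1, hB1⟩ := dyck_decomp_unique hpath x.2.1.1 y.2.1.1
    have hboundx : ∀ i ∈ x.1.1.2, i < x.1.1.1.length := fun i hi => (x.2.1.2 i hi).1
    have hboundy : ∀ i ∈ y.1.1.2, i < y.1.1.1.length := fun i hi => (y.2.1.2 i hi).1
    rw [hA1] at hmark hboundx
    obtain ⟨hSA, hSB, -⟩ := markUp_inj hboundx hboundy hmark
    apply Subtype.ext
    have e1 : x.1.1 = y.1.1 := Prod.ext hA1 hSA
    have e2 : x.1.2 = y.1.2 := Prod.ext hB1 hSB
    exact Prod.ext e1 e2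
  · rintro ⟨⟨p, S⟩, ⟨hsp, hlen, hcard⟩, hq⟩
    have hne : p ≠ [] := by
      intro h0
      rw [h0] at hlen
      simp at hlen
    obtain ⟨A, B, SA, SB, ε', heq, hSeq, hA, hB, hε', hbound, hcard'⟩ :=
      special_decompose hpar hsp hne
    dsimp only at heq hSeq hcard' ⊢
    have hεε : ε' = ε := by
      have h1 : QMark (p, S) ↔ ε' = true := by
        rw [show ((p : List Bool), S) = (true :: (A ++ false :: B), S) by rw [heq]]
        rw [qmark_iff_of_decomp hA.1, hSeq]
        exact mem_markUp_close hbound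
      rw [h1] at hq
      cases ε' <;> cases ε <;> simp_all
    have hlen2 : A.length + B.length = 2*n := by
      rw [heq] at hlen
      simp only [List.length_cons, List.length_append, List.length_cons] at hlen
      omega
    have hcard2 : SA.card + SB.card = k := by
      rw [hεε] at hcard'
      rw [hcard] at hcard'
      cases ε <;> simp at hcard' <;> omega
    refine ⟨⟨((A, SA), (B, SB)), hA, hB, by dsimp only; omega, by dsimp only; omega⟩, ?_⟩
    apply Subtype.ext
    dsimp only
    rw [← heq, ← hεε, ← hSeq]

lemma special_zero_not_qmark {ps : List Bool × Finset ℕ} (hs : Special 0 ps) :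
    ¬ QMark ps := by
  rintro ⟨A, B, heq, hAd, hmem⟩
  have := (hs.2 _ hmem).2.2
  rw [heq] at this
  rw [dh_eq, wtake_cons_mid dw _ _ _ _ (by omega) (by omega)] at this
  simp only [Nat.add_sub_cancel, List.take_length] at this
  have hA0 : wsum dw A = 0 := by rw [← dh_eq]; exact hAd.1
  rw [hA0] at this
  simp [dw] at this

lemma card_E_succ (n k : ℕ) :
    Nat.card (ESet (n+1) k) = Nat.card (PD 1 0 n k) := by
  have h1 : Nat.card (PD ((1:ℤ)-0) 0 n k) = Nat.card (PD 1 0 n k) := by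
    norm_num
  rw [← h1, ← card_dyck_master 0 (Or.inl rfl) false (by simp) n k]
  apply Nat.card_congr
  apply Equiv.subtypeEquivRight
  intro ps
  constructor
  · rintro ⟨hs, hl, hc⟩
    refine ⟨⟨hs, hl, by simpa using hc⟩, ?_⟩
    simp only [Bool.false_eq_true, iff_false]
    exact special_zero_not_qmark hs
  · rintro ⟨⟨hs, hl, hc⟩, -⟩
    exact ⟨hs, hl, by simpa using hc⟩

lemma card_M1 (n k : ℕ) :
    Nat.card {ps : List Bool × Finset ℕ //
        (IsOddSpecial ps ∧ ps.1.length = 2*(n+1) ∧ ps.2.card = k+1) ∧ QMark ps} =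
      Nat.card (PD 0 1 n k) := by
  have h1 : Nat.card (PD ((1:ℤ)-1) 1 n k) = Nat.card (PD 0 1 n k) := by
    norm_num
  rw [← h1, ← card_dyck_master 1 (Or.inr rfl) true (fun _ => rfl) n k]
  apply Nat.card_congr
  apply Equiv.subtypeEquivRight
  intro ps
  constructor
  · rintro ⟨⟨hs, hl, hc⟩, hqm⟩
    exact ⟨⟨hs, hl, by simpa using hc⟩, by simp [hqm]⟩
  · rintro ⟨⟨hs, hl, hc⟩, hqm⟩
    exact ⟨⟨hs, hl, by simpa using hc⟩, hqm.mpr rfl⟩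

lemma card_M1_zero (n : ℕ) :
    Nat.card {ps : List Bool × Finset ℕ //
        (IsOddSpecial ps ∧ ps.1.length = 2*(n+1) ∧ ps.2.card = 0) ∧ QMark ps} = 0 := by
  have : IsEmpty {ps : List Bool × Finset ℕ //
      (IsOddSpecial ps ∧ ps.1.length = 2*(n+1) ∧ ps.2.card = 0) ∧ QMark ps} := by
    constructor
    rintro ⟨ps, ⟨-, -, hc⟩, A, B, -, -, hmem⟩
    rw [Finset.card_eq_zero] at hc
    rw [hc] at hmem
    simp at hmem
  exact Nat.card_of_isEmpty

lemma card_M0 (n k : ℕ) :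
    Nat.card {ps : List Bool × Finset ℕ //
        (IsOddSpecial ps ∧ ps.1.length = 2*(n+1) ∧ ps.2.card = k) ∧ ¬ QMark ps} =
      Nat.card (PD 0 1 n k) := by
  have h1 : Nat.card (PD ((1:ℤ)-1) 1 n k) = Nat.card (PD 0 1 n k) := by
    norm_num
  rw [← h1, ← card_dyck_master 1 (Or.inr rfl) false (by simp) n k]
  apply Nat.card_congr
  apply Equiv.subtypeEquivRight
  intro ps
  constructor
  · rintro ⟨⟨hs, hl, hc⟩, hqm⟩
    exact ⟨⟨hs, hl, by simpa using hc⟩, by simp [hqm]⟩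
  · rintro ⟨⟨hs, hl, hc⟩, hqm⟩
    refine ⟨⟨hs, hl, by simpa using hc⟩, ?_⟩
    simp only [Bool.false_eq_true, iff_false] at hqm
    exact hqm

/-! ### Decomposition bijections: Schröder side -/

lemma count_horiz_cons_up (l : List SchStep) :
    (SchStep.up :: l).count SchStep.horiz = l.count SchStep.horiz := by
  rw [List.count_cons]
  simp

lemma count_horiz_cons_down (l : List SchStep) :
    (SchStep.down :: l).count SchStep.horiz = l.count SchStep.horiz := by
  rw [List.count_cons]
  simp

lemma count_horiz_cons_horiz (l : List SchStep) :
    (SchStep.horiz :: l).count SchStep.horiz = l.count SchStep.horiz + 1 := by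
  rw [List.count_cons]
  simp

lemma card_L_succ (n k : ℕ) :
    Nat.card (LSet (n+1) k) =
      Nat.card (PSch IsBigSchroeder IsLittleSchroeder n k) := by
  apply Nat.card_congr
  apply Equiv.symm
  apply Equiv.ofBijective (f := fun x : PSch IsBigSchroeder IsLittleSchroeder n k =>
    (⟨SchStep.up :: (x.1.1 ++ SchStep.down :: x.1.2), by
      obtain ⟨hA, hB, hlen, hcnt⟩ := x.2
      refine ⟨isLittle_compose hA hB, ?_, ?_⟩
      · show pathLen (SchStep.up :: (x.1.1 ++ SchStep.down :: x.1.2)) = 2*(n+1)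
        simp [SchStep.len]
        omega
      · show (SchStep.up :: (x.1.1 ++ SchStep.down :: x.1.2)).count SchStep.horiz = k
        rw [count_horiz_cons_up, List.count_append, count_horiz_cons_down]
        omega⟩ : LSet (n+1) k))
  constructor
  · intro x y h
    have h' := congrArg Subtype.val h
    obtain ⟨h1, h2⟩ := big_decomp_unique h' x.2.1 y.2.1
    exact Subtype.ext (Prod.ext h1 h2)
  · rintro ⟨p, hlit, hlen, hcnt⟩
    have hne : p ≠ [] := by
      intro h0
      rw [h0] at hlen
      simp at hlen
    obtain ⟨A, B, heq, hA, hB⟩ := isLittle_decompose hlit hne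
    have hlen2 : pathLen A + pathLen B = 2*n := by
      rw [heq] at hlen
      simp [SchStep.len] at hlen
      omega
    have hcnt2 : A.count SchStep.horiz + B.count SchStep.horiz = k := by
      rw [heq, count_horiz_cons_up, List.count_append, count_horiz_cons_down] at hcnt
      omega
    exact ⟨⟨(A, B), hA, hB, hlen2, hcnt2⟩, Subtype.ext heq.symm⟩

lemma card_B_split (N k : ℕ) :
    Nat.card (BSet N k) =
      Nat.card {p : List SchStep //
        (IsBigSchroeder p ∧ pathLen p = 2*N ∧ p.count SchStep.horiz = k) ∧ HasGF p} +
      Nat.card (LSet N k) := by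
  haveI : Finite {p : List SchStep //
      IsBigSchroeder p ∧ pathLen p = 2*N ∧ p.count SchStep.horiz = k} :=
    (inferInstance : Finite (BSet N k))
  have h := card_split
    (fun p : List SchStep =>
      IsBigSchroeder p ∧ pathLen p = 2*N ∧ p.count SchStep.horiz = k) HasGF
  rw [show Nat.card (BSet N k) = Nat.card {p : List SchStep //
      IsBigSchroeder p ∧ pathLen p = 2*N ∧ p.count SchStep.horiz = k} from rfl, h]
  congr 1
  apply Nat.card_congr
  apply Equiv.subtypeEquivRight
  intro p
  constructor
  · rintro ⟨⟨hb, hl, hc⟩, hgf⟩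
    exact ⟨(little_iff_not_GF hb).mpr hgf, hl, hc⟩
  · rintro ⟨hlit, hl, hc⟩
    exact ⟨⟨hlit.1, hl, hc⟩, (little_iff_not_GF hlit.1).mp hlit⟩

lemma card_GF (n k : ℕ) :
    Nat.card {p : List SchStep //
        (IsBigSchroeder p ∧ pathLen p = 2*(n+1) ∧ p.count SchStep.horiz = k+1) ∧
          HasGF p} =
      Nat.card (PSch IsLittleSchroeder IsBigSchroeder n k) := by
  apply Nat.card_congr
  apply Equiv.symm
  apply Equiv.ofBijective (f := fun x : PSch IsLittleSchroeder IsBigSchroeder n k =>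
    (⟨x.1.1 ++ SchStep.horiz :: x.1.2, by
      obtain ⟨hq, hr, hlen, hcnt⟩ := x.2
      obtain ⟨hbig, hgf⟩ := GF_compose hq hr
      refine ⟨⟨hbig, ?_, ?_⟩, hgf⟩
      · show pathLen (x.1.1 ++ SchStep.horiz :: x.1.2) = 2*(n+1)
        simp [SchStep.len]
        omega
      · show (x.1.1 ++ SchStep.horiz :: x.1.2).count SchStep.horiz = k+1
        rw [List.count_append, count_horiz_cons_horiz]
        omega⟩))
  constructor
  · intro x y h
    have h' := congrArg Subtype.val h
    obtain ⟨h1, h2⟩ := GF_unique h' x.2.1 y.2.1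
    exact Subtype.ext (Prod.ext h1 h2)
  · rintro ⟨p, ⟨hb, hlen, hcnt⟩, hgf⟩
    obtain ⟨q, r, heq, hq, hr⟩ := GF_decompose hb hgf
    have hlen2 : pathLen q + pathLen r = 2*n := by
      rw [heq] at hlen
      simp [SchStep.len] at hlen
      omega
    have hcnt2 : q.count SchStep.horiz + r.count SchStep.horiz = k := by
      rw [heq, List.count_append, count_horiz_cons_horiz] at hcnt
      omega
    exact ⟨⟨(q, r), hq, hr, hlen2, hcnt2⟩, Subtype.ext heq.symm⟩

lemma card_GF_zero (N : ℕ) :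
    Nat.card {p : List SchStep //
        (IsBigSchroeder p ∧ pathLen p = 2*N ∧ p.count SchStep.horiz = 0) ∧
          HasGF p} = 0 := by
  have : IsEmpty {p : List SchStep //
      (IsBigSchroeder p ∧ pathLen p = 2*N ∧ p.count SchStep.horiz = 0) ∧ HasGF p} := by
    constructor
    rintro ⟨p, ⟨-, -, hc⟩, q, r, heq, -⟩
    rw [List.count_eq_zero] at hc
    apply hc
    rw [heq]
    exact List.mem_append_right _ List.mem_cons_self
  exact Nat.card_of_isEmpty

/-! ### Base cases -/

lemma isDyck_nil : IsDyck [] := by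
  refine ⟨rfl, fun q hq => ?_⟩
  rw [List.prefix_nil.mp hq]
  exact le_refl 0

lemma isLittle_nil : IsLittleSchroeder [] := by
  refine ⟨⟨rfl, fun q hq => ?_⟩, fun q r h => ?_⟩
  · rw [List.prefix_nil.mp hq]
    exact le_refl 0
  · exact absurd h (by cases q <;> simp)

lemma card_dyck_base (par : ℤ) (k : ℕ) :
    Nat.card {ps : List Bool × Finset ℕ //
      Special par ps ∧ ps.1.length = 2*0 ∧ ps.2.card = k} =
      if k = 0 then 1 else 0 := by
  rcases Nat.eq_zero_or_pos k with rfl | hk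
  · simp only [if_pos rfl]
    haveI : Unique {ps : List Bool × Finset ℕ //
        Special par ps ∧ ps.1.length = 2*0 ∧ ps.2.card = 0} := by
      refine ⟨⟨⟨([], ∅), ⟨isDyck_nil, by simp⟩, by simp, by simp⟩⟩, ?_⟩
      rintro ⟨⟨p, S⟩, ⟨-, hm⟩, hl, hc⟩
      have hp : p = [] := by
        have h2 : p.length = 0 := by simpa using hl
        exact List.length_eq_zero_iff.mp h2
      subst hp
      have hS : S = ∅ := by
        apply Finset.eq_empty_of_forall_notMem
        intro i hi
        have h2 := (hm i hi).1
        simp at h2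
      subst hS
      rfl
    exact Nat.card_unique
  · rw [if_neg (by omega)]
    haveI : IsEmpty {ps : List Bool × Finset ℕ //
        Special par ps ∧ ps.1.length = 2*0 ∧ ps.2.card = k} := by
      constructor
      rintro ⟨⟨p, S⟩, ⟨-, hm⟩, hl, hc⟩
      have hS : S = ∅ := by
        apply Finset.eq_empty_of_forall_notMem
        intro i hi
        have h1 : i < p.length := by simpa using (hm i hi).1
        have h2 : p.length = 0 := by simpa using hl
        omega
      rw [hS] at hc
      simp at hc
      omega
    exact Nat.card_of_isEmpty

lemma card_sch_base (k : ℕ) (P : List SchStep → Prop) (hP : P []) :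
    Nat.card {p : List SchStep //
      P p ∧ pathLen p = 2*0 ∧ p.count SchStep.horiz = k} =
      if k = 0 then 1 else 0 := by
  have hnil : ∀ p : List SchStep, pathLen p = 0 → p = [] := by
    intro p h
    have := length_le_pathLen p
    exact List.length_eq_zero_iff.mp (by omega)
  rcases Nat.eq_zero_or_pos k with rfl | hk
  · simp only [if_pos rfl]
    haveI : Unique {p : List SchStep //
        P p ∧ pathLen p = 2*0 ∧ p.count SchStep.horiz = 0} := by
      refine ⟨⟨⟨[], hP, by simp, by simp⟩⟩, ?_⟩
      rintro ⟨p, -, hl, -⟩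
      have := hnil p (by omega)
      subst this
      rfl
    exact Nat.card_unique
  · rw [if_neg (by omega)]
    haveI : IsEmpty {p : List SchStep //
        P p ∧ pathLen p = 2*0 ∧ p.count SchStep.horiz = k} := by
      constructor
      rintro ⟨p, -, hl, hc⟩
      have := hnil p (by omega)
      subst this
      simp at hc
      omega
    exact Nat.card_of_isEmpty

/-! ### Counting functions and recurrences -/

noncomputable def Mc (n k : ℕ) : ℕ := Nat.card (MSet n k)
noncomputable def Ec (n k : ℕ) : ℕ := Nat.card (ESet n k)
noncomputable def Sc (n k : ℕ) : ℕ := Nat.card (BSet n k)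
noncomputable def Lc (n k : ℕ) : ℕ := Nat.card (LSet n k)

lemma special_len_even {par : ℤ} {ps : List Bool × Finset ℕ} (h : Special par ps) :
    ps.1.length % 2 = 0 := by
  have := dyck_length_even h.1.1
  omega

lemma big_len_even {p : List SchStep} (h : IsBigSchroeder p) :
    pathLen p % 2 = 0 := by
  have := schroeder_len_even h.1
  omega

lemma little_len_even {p : List SchStep} (h : IsLittleSchroeder p) :
    pathLen p % 2 = 0 := big_len_even h.1

lemma card_PD_sum (p1 p2 : ℤ) (hp1 : ∀ ps, Special p1 ps → ps.1.length % 2 = 0)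
    (hp2 : ∀ ps, Special p2 ps → ps.1.length % 2 = 0) (n k : ℕ) :
    Nat.card (PD p1 p2 n k) =
      ∑ ab ∈ Finset.HasAntidiagonal.antidiagonal n, ∑ ij ∈ Finset.HasAntidiagonal.antidiagonal k,
        Nat.card {u : List Bool × Finset ℕ //
          Special p1 u ∧ u.1.length = 2*ab.1 ∧ u.2.card = ij.1} *
        Nat.card {v : List Bool × Finset ℕ //
          Special p2 v ∧ v.1.length = 2*ab.2 ∧ v.2.card = ij.2} := by
  haveI : Finite {x : (List Bool × Finset ℕ) × (List Bool × Finset ℕ) //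
      Special p1 x.1 ∧ Special p2 x.2 ∧ x.1.1.length + x.2.1.length = 2*n ∧
        x.1.2.card + x.2.2.card = k} := inferInstanceAs (Finite (PD p1 p2 n k))
  exact card_pair_sum (Special p1) (Special p2)
    (fun u => u.1.length) (fun u => u.2.card)
    (fun u => u.1.length) (fun u => u.2.card) n k hp1 hp2

lemma card_PSch_sum (P1 P2 : List SchStep → Prop)
    (hp1 : ∀ p, P1 p → pathLen p % 2 = 0) (hp2 : ∀ p, P2 p → pathLen p % 2 = 0)
    (n k : ℕ) :
    Nat.card (PSch P1 P2 n k) =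
      ∑ ab ∈ Finset.HasAntidiagonal.antidiagonal n, ∑ ij ∈ Finset.HasAntidiagonal.antidiagonal k,
        Nat.card {u : List SchStep //
          P1 u ∧ pathLen u = 2*ab.1 ∧ u.count SchStep.horiz = ij.1} *
        Nat.card {v : List SchStep //
          P2 v ∧ pathLen v = 2*ab.2 ∧ v.count SchStep.horiz = ij.2} := by
  haveI : Finite {x : List SchStep × List SchStep //
      P1 x.1 ∧ P2 x.2 ∧ pathLen x.1 + pathLen x.2 = 2*n ∧
        x.1.count SchStep.horiz + x.2.count SchStep.horiz = k} :=
    inferInstanceAs (Finite (PSch P1 P2 n k))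
  exact card_pair_sum P1 P2 pathLen (fun u => u.count SchStep.horiz)
    pathLen (fun u => u.count SchStep.horiz) n k hp1 hp2

lemma rec_E (n k : ℕ) : Ec (n+1) k =
    ∑ ab ∈ Finset.HasAntidiagonal.antidiagonal n, ∑ ij ∈ Finset.HasAntidiagonal.antidiagonal k,
      Mc ab.1 ij.1 * Ec ab.2 ij.2 := by
  rw [Ec, card_E_succ,
    card_PD_sum 1 0 (fun ps h => special_len_even h) (fun ps h => special_len_even h)]
  rfl

lemma rec_L (n k : ℕ) : Lc (n+1) k =
    ∑ ab ∈ Finset.HasAntidiagonal.antidiagonal n, ∑ ij ∈ Finset.HasAntidiagonal.antidiagonal k,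
      Sc ab.1 ij.1 * Lc ab.2 ij.2 := by
  rw [Lc, card_L_succ,
    card_PSch_sum _ _ (fun p h => big_len_even h) (fun p h => little_len_even h)]
  rfl

lemma rec_M_split (n K : ℕ) : Mc (n+1) K =
    Nat.card {ps : List Bool × Finset ℕ //
      (IsOddSpecial ps ∧ ps.1.length = 2*(n+1) ∧ ps.2.card = K) ∧ QMark ps} +
    Nat.card {ps : List Bool × Finset ℕ //
      (IsOddSpecial ps ∧ ps.1.length = 2*(n+1) ∧ ps.2.card = K) ∧ ¬ QMark ps} := by
  haveI : Finite {ps : List Bool × Finset ℕ //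
      IsOddSpecial ps ∧ ps.1.length = 2*(n+1) ∧ ps.2.card = K} :=
    inferInstanceAs (Finite (MSet (n+1) K))
  exact card_split
    (fun ps : List Bool × Finset ℕ =>
      IsOddSpecial ps ∧ ps.1.length = 2*(n+1) ∧ ps.2.card = K) QMark

lemma rec_M_zero (n : ℕ) : Mc (n+1) 0 =
    ∑ ab ∈ Finset.HasAntidiagonal.antidiagonal n, ∑ ij ∈ Finset.HasAntidiagonal.antidiagonal 0,
      Ec ab.1 ij.1 * Mc ab.2 ij.2 := by
  rw [rec_M_split, card_M1_zero, card_M0, Nat.zero_add,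
    card_PD_sum 0 1 (fun ps h => special_len_even h) (fun ps h => special_len_even h)]
  rfl

lemma rec_M_succ (n k : ℕ) : Mc (n+1) (k+1) =
    (∑ ab ∈ Finset.HasAntidiagonal.antidiagonal n, ∑ ij ∈ Finset.HasAntidiagonal.antidiagonal k,
      Ec ab.1 ij.1 * Mc ab.2 ij.2) +
    ∑ ab ∈ Finset.HasAntidiagonal.antidiagonal n, ∑ ij ∈ Finset.HasAntidiagonal.antidiagonal (k+1),
      Ec ab.1 ij.1 * Mc ab.2 ij.2 := by
  rw [rec_M_split, card_M1, card_M0,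
    card_PD_sum 0 1 (fun ps h => special_len_even h) (fun ps h => special_len_even h),
    card_PD_sum 0 1 (fun ps h => special_len_even h) (fun ps h => special_len_even h)]
  rfl

lemma rec_S_zero (N : ℕ) : Sc N 0 = Lc N 0 := by
  rw [Sc, card_B_split, card_GF_zero, Nat.zero_add]
  rfl

lemma rec_S_succ (n k : ℕ) : Sc (n+1) (k+1) = Lc (n+1) (k+1) +
    ∑ ab ∈ Finset.HasAntidiagonal.antidiagonal n, ∑ ij ∈ Finset.HasAntidiagonal.antidiagonal k,
      Lc ab.1 ij.1 * Sc ab.2 ij.2 := by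
  rw [Sc, card_B_split, card_GF,
    card_PSch_sum _ _ (fun p h => little_len_even h) (fun p h => big_len_even h),
    Nat.add_comm]
  rfl

/-! ### Swapping the antidiagonal -/

lemma sum_ad_swap (m : ℕ) (F : ℕ × ℕ → ℕ) :
    ∑ ab ∈ Finset.HasAntidiagonal.antidiagonal m, F ab = ∑ ab ∈ Finset.HasAntidiagonal.antidiagonal m, F ab.swap := by
  conv_lhs => rw [← Finset.HasAntidiagonal.map_swap_antidiagonal (n := m)]
  rw [Finset.sum_map]
  rfl

lemma sum_swap_ad (n k : ℕ) (f g : ℕ → ℕ → ℕ) :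
    (∑ ab ∈ Finset.HasAntidiagonal.antidiagonal n, ∑ ij ∈ Finset.HasAntidiagonal.antidiagonal k,
      f ab.1 ij.1 * g ab.2 ij.2) =
    ∑ ab ∈ Finset.HasAntidiagonal.antidiagonal n, ∑ ij ∈ Finset.HasAntidiagonal.antidiagonal k,
      g ab.1 ij.1 * f ab.2 ij.2 := by
  rw [sum_ad_swap n]
  apply Finset.sum_congr rfl
  intro ab _
  rw [sum_ad_swap k]
  apply Finset.sum_congr rfl
  intro ij _
  simp only [Prod.fst_swap, Prod.snd_swap]
  ring

/-! ### Main induction -/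

lemma base_M (k : ℕ) : Mc 0 k = Sc 0 k := by
  have h1 : Mc 0 k = if k = 0 then 1 else 0 := card_dyck_base 1 k
  have h2 : Sc 0 k = if k = 0 then 1 else 0 :=
    card_sch_base k IsBigSchroeder isLittle_nil.1
  rw [h1, h2]

lemma base_E (k : ℕ) : Ec 0 k = Lc 0 k := by
  have h1 : Ec 0 k = if k = 0 then 1 else 0 := card_dyck_base 0 k
  have h2 : Lc 0 k = if k = 0 then 1 else 0 :=
    card_sch_base k IsLittleSchroeder isLittle_nil
  rw [h1, h2]

theorem main_both : ∀ n k, Mc n k = Sc n k ∧ Ec n k = Lc n k := by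
  intro n
  induction n using Nat.strong_induction_on with
  | _ n IH =>
    rcases n with _ | m
    · exact fun k => ⟨base_M k, base_E k⟩
    · have hE : ∀ k', Ec (m+1) k' = Lc (m+1) k' := by
        intro k'
        rw [rec_E, rec_L]
        apply Finset.sum_congr rfl
        intro ab hab
        apply Finset.sum_congr rfl
        intro ij _
        rw [Finset.HasAntidiagonal.mem_antidiagonal] at hab
        rw [(IH ab.1 (by omega) ij.1).1, (IH ab.2 (by omega) ij.2).2]
      intro k
      refine ⟨?_, hE k⟩
      have hconv : ∀ K, (∑ ab ∈ Finset.HasAntidiagonal.antidiagonal m, ∑ ij ∈ Finset.HasAntidiagonal.antidiagonal K,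
          Ec ab.1 ij.1 * Mc ab.2 ij.2) =
          ∑ ab ∈ Finset.HasAntidiagonal.antidiagonal m, ∑ ij ∈ Finset.HasAntidiagonal.antidiagonal K,
          Lc ab.1 ij.1 * Sc ab.2 ij.2 := by
        intro K
        apply Finset.sum_congr rfl
        intro ab hab
        apply Finset.sum_congr rfl
        intro ij _
        rw [Finset.HasAntidiagonal.mem_antidiagonal] at hab
        rw [(IH ab.1 (by omega) ij.1).2, (IH ab.2 (by omega) ij.2).1]
      rcases k with _ | j
      · rw [rec_M_zero, rec_S_zero, hconv 0, sum_swap_ad, ← rec_L]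
      · rw [rec_M_succ, rec_S_succ, hconv j, hconv (j+1), sum_swap_ad m (j+1), ← rec_L]
        omega


/-- The number of odd-special Dyck paths of length `2n` with exactly `k` special steps
equals the number of big Schröder paths of length `2n` with exactly `k` double
horizontal steps. -/
theorem odd_special_eq_big_schroeder (n k : ℕ) :
    Nat.card {ps : List Bool × Finset ℕ //
        IsOddSpecial ps ∧ ps.1.length = 2 * n ∧ ps.2.card = k} =
      Nat.card {p : List SchStep //
        IsBigSchroeder p ∧ pathLen p = 2 * n ∧ p.count SchStep.horiz = k} := by
  exact (main_both n k).1
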